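/- Let g : Spec M → Spec L be induced by a finite étale L-algebra M = L[t]/(φ(t)) over a field L of characteristic 0, with φ separable of degree r, and let E = M^N with connection ∇ given by an N×N matrix A(t) = ∑_{i=0}^{r-1} t^i A_i with A_i matrices over L ⊗ Ω^1. Writing α_i = Tr(A_i) ∈ L-coefficients, the trace of the connection matrix of the pushforward connection g_*∇ on g_*E ≅ L^{rN} in the basis {t^i e_j} equals Tr_{M/L}(∑_{i=0}^{r-1} t^i α_i) + N·∑_{j=0}^{r-1} β_{jj}, where d(t^j) = ∑_{i=0}^{r-1} t^i β_{ji} in M ⊗ Ω^1. Equivalently, w_1(g_*E, g_*∇) = g_*(w_1(E,∇)) + N·w_1(g_*M, g_*d). -/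

import Mathlib

open scoped TensorProduct

private lemma aux_single (L : Type) [Field L] (Ω : Type) [AddCommGroup Ω] [Module L Ω]
    (M : Type) [CommRing M] [Algebra L M] (N : ℕ)
    (f : M →ₗ[L] L) (j k : Fin N) (x : M ⊗[L] Ω) :
  (TensorProduct.lid L Ω) ((f.comp (LinearMap.proj j)).rTensor Ω
      ((LinearMap.single L (fun _ : Fin N => M) k).rTensor Ω x))
    = if j = k then (TensorProduct.lid L Ω) (f.rTensor Ω x) else 0 := by
  induction x using TensorProduct.induction_on with
  | zero => simp
  | tmul m ω => simp [LinearMap.rTensor_tmul, Pi.single_apply]; split <;> simp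
  | add x y hx hy => simp only [map_add, hx, hy]; split <;> simp

private lemma aux_trace (L : Type) [Field L] (Ω : Type) [AddCommGroup Ω] [Module L Ω]
    (M : Type) [CommRing M] [Algebra L M] (r : ℕ) (t : M)
    (b : Module.Basis (Fin r) L M) (hb : ∀ i : Fin r, b i = t ^ (i : ℕ)) (x : M ⊗[L] Ω) :
    ∑ i : Fin r, (TensorProduct.lid L Ω) ((b.coord i).rTensor Ω ((t ^ (i:ℕ)) • x))
      = (TensorProduct.lid L Ω) ((Algebra.trace L M).rTensor Ω x) := by
  induction x using TensorProduct.induction_on with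
  | zero => simp
  | tmul m ω =>
      have : ∀ i : Fin r, (t ^ (i:ℕ)) • (m ⊗ₜ[L] ω) = (t ^ (i:ℕ) * m) ⊗ₜ[L] ω := by
        intro i; rw [TensorProduct.smul_tmul']; rfl
      simp only [this, LinearMap.rTensor_tmul, TensorProduct.lid_tmul, ← Finset.sum_smul]
      congr 1
      rw [Algebra.trace_eq_matrix_trace b, Matrix.trace]
      simp [Matrix.diag, Algebra.leftMulMatrix_eq_repr_mul, hb, mul_comm, Module.Basis.coord_apply]
  | add x y hx hy => simp only [smul_add, map_add, Finset.sum_add_distrib, hx, hy]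

theorem stmt13 (L : Type) [Field L] [CharZero L]
    (Ω : Type) [AddCommGroup Ω] [Module L Ω]
    (M : Type) [CommRing M] [Algebra L M]
    (r : ℕ) (t : M) (b : Module.Basis (Fin r) L M) (hb : ∀ i : Fin r, b i = t ^ (i : ℕ))
    (dM : M → M ⊗[L] Ω)
    (hdM_add : ∀ x y : M, dM (x + y) = dM x + dM y)
    (hdM_leib : ∀ x y : M, dM (x * y) = x • dM y + y • dM x)
    (N : ℕ)
    (A : Matrix (Fin N) (Fin N) (M ⊗[L] Ω))
    (β : Fin r → Fin r → Ω)
    (hβ : ∀ i : Fin r, dM (t ^ (i : ℕ)) = ∑ i' : Fin r, (t ^ (i' : ℕ)) ⊗ₜ[L] β i i')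
    (C : Matrix (Fin r × Fin N) (Fin r × Fin N) Ω)
    (hC : ∀ (i : Fin r) (j : Fin N),
      (∑ k : Fin N,
        (LinearMap.single L (fun _ : Fin N => M) k).rTensor Ω ((t ^ (i : ℕ)) • A k j))
        + (LinearMap.single L (fun _ : Fin N => M) j).rTensor Ω (dM (t ^ (i : ℕ)))
      = ∑ p : Fin r × Fin N,
          ((t ^ (p.1 : ℕ)) • (Pi.single p.2 1 : Fin N → M)) ⊗ₜ[L] C p (i, j)) :
    ∑ p : Fin r × Fin N, C p p
      = (TensorProduct.lid L Ω) ((Algebra.trace L M).rTensor Ω (∑ k, A k k))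
        + N • ∑ i, β i i := by
  classical
  have key : ∀ p : Fin r × Fin N, C p p
      = (TensorProduct.lid L Ω) ((b.coord p.1).rTensor Ω ((t ^ (p.1:ℕ)) • A p.2 p.2))
        + β p.1 p.1 := by
    intro p
    have h := congrArg (fun x => (TensorProduct.lid L Ω)
        (((b.coord p.1).comp (LinearMap.proj p.2 :
          (Fin N → M) →ₗ[L] M)).rTensor Ω x)) (hC p.1 p.2)
    simp only [map_add, map_sum] at h
    -- simplify LHS of h
    rw [Finset.sum_congr rfl (fun k _ =>
      aux_single L Ω M N (b.coord p.1) p.2 k ((t ^ (p.1:ℕ)) • A k p.2)),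
      Finset.sum_ite_eq (Finset.univ) p.2
        (fun k => (TensorProduct.lid L Ω) ((b.coord p.1).rTensor Ω ((t ^ (p.1:ℕ)) • A k p.2))),
      aux_single L Ω M N (b.coord p.1) p.2 p.2 (dM (t ^ (p.1:ℕ)))] at h
    simp only [Finset.mem_univ, if_true] at h
    -- second LHS term via hβ
    rw [hβ p.1] at h
    simp only [map_sum, LinearMap.rTensor_tmul, TensorProduct.lid_tmul] at h
    have hcoord : ∀ i' : Fin r, (b.coord p.1) (t ^ (i':ℕ)) = if i' = p.1 then 1 else 0 := by
      intro i'
      rw [← hb i', Module.Basis.coord_apply, b.repr_self, Finsupp.single_apply]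
    rw [Finset.sum_congr rfl (fun i' _ => by rw [hcoord i']),
      Finset.sum_congr rfl (fun i' _ => ite_smul _ _ _ _)] at h
    simp only [one_smul, zero_smul, Finset.sum_ite_eq' Finset.univ p.1,
      Finset.mem_univ, if_true] at h
    -- RHS of h
    have hRHS : ∀ q : Fin r × Fin N,
        ((b.coord p.1).comp (LinearMap.proj p.2 : (Fin N → M) →ₗ[L] M))
            ((t ^ (q.1:ℕ)) • (Pi.single q.2 1 : Fin N → M)) • C q (p.1, p.2)
        = if q = p then C p (p.1, p.2) else 0 := by
      intro q
      simp only [LinearMap.coe_comp, Function.comp_apply, LinearMap.proj_apply,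
        Pi.smul_apply, Pi.single_apply, smul_eq_mul]
      by_cases h2 : p.2 = q.2
      · rw [if_pos h2, mul_one, hcoord q.1]
        by_cases h1 : q.1 = p.1
        · have : q = p := Prod.ext h1 h2.symm
          rw [if_pos h1, if_pos this, one_smul, this]
        · have : ¬ q = p := fun hq => h1 (by rw [hq])
          rw [if_neg h1, if_neg this, zero_smul]
      · have : ¬ q = p := fun hq => h2 (by rw [hq])
        rw [if_neg h2, mul_zero, map_zero, if_neg this, zero_smul]
    rw [Finset.sum_congr rfl (fun q _ => hRHS q), Finset.sum_ite_eq' Finset.univ p] at h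
    simp only [Finset.mem_univ, if_true] at h
    have hp : (p.1, p.2) = p := rfl
    rw [hp] at h
    exact h.symm
  rw [Finset.sum_congr rfl (fun p _ => key p)]
  rw [Finset.sum_add_distrib]
  congr 1
  · rw [← aux_trace L Ω M r t b hb (∑ k, A k k), Fintype.sum_prod_type]
    refine Finset.sum_congr rfl fun i _ => ?_
    rw [Finset.smul_sum, map_sum, map_sum]
  · rw [Fintype.sum_prod_type_right]
    simp [Finset.sum_const, Finset.card_univ]
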